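/- The path constructed by: (1) 2m+1 N steps, then 2m E steps, then one N step, then two S steps; (2) appending m walks of length 2m, each a left-walk if the current position (2m+x, 2m-x) has x > 0 and a right-walk otherwise; (3) S steps down to the x-axis followed by W steps to the origin, is a 2sip-walk of length 2m² + 8m + 4. -/

import Mathlib

open Filter

/-- A step of a lattice walk: North, East, South or West. -/
inductive Step : Type
  | N | E | S | W
  deriving DecidableEq

/-- The vector of a step. -/
def Step.vec : Step → ℤ × ℤ
  | .N => (0, 1)
  | .E => (1, 0)
  | .S => (0, -1)
  | .W => (-1, 0)

/-- The endpoint of a walk starting at the origin. -/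
def endpt (w : List Step) : ℤ × ℤ := (w.map Step.vec).sum

/-- All points visited by a walk starting at the origin (including start and end). -/
def positions (w : List Step) : List (ℤ × ℤ) :=
  w.scanl (fun p s => p + s.vec) ((0, 0) : ℤ × ℤ)

/-- A walk is eager if it contains no ES and no NW corner. -/
def Eager (w : List Step) : Prop :=
  ¬ [Step.E, Step.S] <:+: w ∧ ¬ [Step.N, Step.W] <:+: w

/-- A quarter-plane loop: a nonempty walk returning to its starting point and
staying (weakly) north-east of it. -/
def IsQPLoop (l : List Step) : Prop :=
  l ≠ [] ∧ endpt l = (0, 0) ∧ ∀ p ∈ positions l, 0 ≤ p.1 ∧ 0 ≤ p.2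

/-- A walk is standard if every QP-subloop begins with an N step. -/
def Standard (w : List Step) : Prop :=
  ∀ a l b : List Step, w = a ++ l ++ b → IsQPLoop l → l.head? = some Step.N

/-- The walk stays in the half-plane x + y ≥ 0. -/
def InHalfPlane (w : List Step) : Prop :=
  ∀ p ∈ positions w, 0 ≤ p.1 + p.2

/-- A big-walk: confined to the half-plane x+y ≥ 0, from (0,0) to the line x+y=0,
standard and eager. -/
def IsBigWalk (w : List Step) : Prop :=
  InHalfPlane w ∧ (endpt w).1 + (endpt w).2 = 0 ∧ Standard w ∧ Eager w

/-- A left-walk: a big-walk ending at (x,-x) with x ≤ 0. -/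
def IsLeftWalk (w : List Step) : Prop := IsBigWalk w ∧ (endpt w).1 ≤ 0

/-- A right-walk: a big-walk ending at (x,-x) with x ≥ 0. -/
def IsRightWalk (w : List Step) : Prop := IsBigWalk w ∧ 0 ≤ (endpt w).1

/-- Vertical-happy: every step taken from a point of the lines x+y=0 or x+y=1
is N or S. -/
def VerticalHappy (w : List Step) : Prop :=
  ∀ a s b, w = a ++ s :: b →
    ((endpt a).1 + (endpt a).2 = 0 ∨ (endpt a).1 + (endpt a).2 = 1) →
    s = Step.N ∨ s = Step.S

/-- A deque-walk: a vertical-happy big-walk. -/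
def IsDequeWalk (w : List Step) : Prop := IsBigWalk w ∧ VerticalHappy w

/-- The walk stays in the quarter plane x, y ≥ 0. -/
def InQuarterPlane (w : List Step) : Prop :=
  ∀ p ∈ positions w, 0 ≤ p.1 ∧ 0 ≤ p.2

/-- A 2sip-walk: a quarter-plane walk from (0,0) to (0,0), standard and eager. -/
def Is2sipWalk (w : List Step) : Prop :=
  InQuarterPlane w ∧ endpt w = (0, 0) ∧ Standard w ∧ Eager w

/-- `bCount n` = number of big-walks of length 2n. -/
noncomputable def bCount (n : ℕ) : ℕ :=
  Nat.card {w : List Step // w.length = 2 * n ∧ IsBigWalk w}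

/-- `blCount n` = number of left-walks of length 2n. -/
noncomputable def blCount (n : ℕ) : ℕ :=
  Nat.card {w : List Step // w.length = 2 * n ∧ IsLeftWalk w}

/-- `brCount n` = number of right-walks of length 2n. -/
noncomputable def brCount (n : ℕ) : ℕ :=
  Nat.card {w : List Step // w.length = 2 * n ∧ IsRightWalk w}

/-- `dCount n` = number of deque-walks of length 2n. -/
noncomputable def dCount (n : ℕ) : ℕ :=
  Nat.card {w : List Step // w.length = 2 * n ∧ IsDequeWalk w}

/-- `pCount n` = number of 2sip-walks of length 2n. -/
noncomputable def pCount (n : ℕ) : ℕ :=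
  Nat.card {w : List Step // w.length = 2 * n ∧ Is2sipWalk w}

/-- Stage (1) of the construction: 2m+1 N steps, 2m E steps, one N step, two S steps. -/
def stage1 (m : ℕ) : List Step :=
  List.replicate (2 * m + 1) Step.N ++ List.replicate (2 * m) Step.E ++
    [Step.N, Step.S, Step.S]

/-- Stage (2): the concatenation of the m chosen walks. -/
def stage2 (m : ℕ) (ws : Fin m → List Step) : List Step := (List.ofFn ws).flatten

/-- Stage (3): S steps down to the x-axis then W steps back to the origin. -/
def stage3 (m : ℕ) (ws : Fin m → List Step) : List Step :=
  List.replicate (endpt (stage1 m ++ stage2 m ws)).2.toNat Step.S ++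
    List.replicate (endpt (stage1 m ++ stage2 m ws)).1.toNat Step.W

/-- The full constructed path. -/
def construct (m : ℕ) (ws : Fin m → List Step) : List Step :=
  stage1 m ++ stage2 m ws ++ stage3 m ws

/-- The tuple of m walks is valid for the construction: each has length 2m, and
is a left-walk if the current position (2m+x, 2m-x) has x > 0, and a right-walk
otherwise. -/
def ValidTuple (m : ℕ) (ws : Fin m → List Step) : Prop :=
  ∀ k : Fin m, (ws k).length = 2 * m ∧
    (if 2 * (m : ℤ) < (endpt (stage1 m ++ ((List.ofFn ws).take (k : ℕ)).flatten)).1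
      then IsLeftWalk (ws k) else IsRightWalk (ws k))


section Infra
open List Step

@[simp] lemma endpt_nil : endpt [] = (0, 0) := rfl

lemma endpt_cons (s : Step) (w : List Step) : endpt (s :: w) = s.vec + endpt w := by
  simp [endpt]

lemma endpt_append (a b : List Step) : endpt (a ++ b) = endpt a + endpt b := by
  simp [endpt]

lemma endpt_replicate (n : ℕ) (c : Step) : endpt (replicate n c) = (n : ℤ) • c.vec := by
  simp [endpt, List.map_replicate, List.sum_replicate]

lemma scanl_eq (p : ℤ × ℤ) (w : List Step) :
    w.scanl (fun p s => p + s.vec) p = w.inits.map (fun t => p + endpt t) := by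
  induction w generalizing p with
  | nil => simp
  | cons s w ih =>
    simp [List.scanl_cons, ih, List.map_map, Function.comp, endpt_cons]
    intro a _
    ring

lemma mem_positions_iff {q : ℤ × ℤ} {w : List Step} :
    q ∈ positions w ↔ ∃ t, t <+: w ∧ endpt t = q := by
  simp [positions, scanl_eq, List.mem_inits, eq_comm, Prod.mk_zero_zero]

lemma endpt_mem_positions {t w : List Step} (h : t <+: w) : endpt t ∈ positions w :=
  mem_positions_iff.2 ⟨t, h, rfl⟩

lemma abs_endpt_le (w : List Step) :
    |(endpt w).1| + |(endpt w).2| ≤ (w.length : ℤ) := by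
  induction w with
  | nil => simp
  | cons s w ih =>
    cases s <;> simp [endpt_cons, Step.vec] <;> push_cast <;>
      · have h1 := abs_add_le (1 : ℤ) ((endpt w).2)
        have h2 := abs_add_le (-1 : ℤ) ((endpt w).2)
        have h3 := abs_add_le (1 : ℤ) ((endpt w).1)
        have h4 := abs_add_le (-1 : ℤ) ((endpt w).1)
        simp at h1 h2 h3 h4
        linarith

lemma endpt_count (w : List Step) :
    endpt w = ((w.count .E : ℤ) - w.count .W, (w.count .N : ℤ) - w.count .S) := by
  induction w with
  | nil => simp
  | cons s w ih =>
    cases s <;> simp [endpt_cons, Step.vec, ih, List.count_cons, Prod.ext_iff] <;> push_cast <;>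
      omega

end Infra

section Infra2
open List Step

lemma join_cons' (w : List Step) (L : List (List Step)) :
    (w :: L).flatten = w ++ L.flatten := rfl

lemma inHalfPlane_iff {w : List Step} :
    InHalfPlane w ↔ ∀ t, t <+: w → 0 ≤ (endpt t).1 + (endpt t).2 := by
  constructor
  · intro h t ht; exact h _ (endpt_mem_positions ht)
  · intro h p hp
    obtain ⟨t, ht, rfl⟩ := mem_positions_iff.1 hp
    exact h t ht

lemma qploop_prefix {l t : List Step} (hl : IsQPLoop l) (ht : t <+: l) :
    0 ≤ (endpt t).1 ∧ 0 ≤ (endpt t).2 :=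
  hl.2.2 _ (endpt_mem_positions ht)

/-- Coordinates of any prefix of a half-plane walk of length ≤ 2m are ≥ -m. -/
lemma bigwalk_prefix_coords {w t : List Step} {m : ℕ} (hw : InHalfPlane w)
    (hlen : w.length ≤ 2 * m) (ht : t <+: w) :
    -(m : ℤ) ≤ (endpt t).1 ∧ -(m : ℤ) ≤ (endpt t).2 := by
  have h1 : 0 ≤ (endpt t).1 + (endpt t).2 := inHalfPlane_iff.1 hw t ht
  have h2 : |(endpt t).1| + |(endpt t).2| ≤ (t.length : ℤ) := abs_endpt_le t
  have h3 : (t.length : ℤ) ≤ 2 * m := by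
    have := ht.length_le
    omega
  have b1 := le_abs_self (endpt t).1
  have b2 := le_abs_self (endpt t).2
  have c1 := neg_abs_le (endpt t).1
  have c2 := neg_abs_le (endpt t).2
  constructor <;> nlinarith [abs_nonneg (endpt t).1, abs_nonneg (endpt t).2]

/-- First step of a nonempty half-plane walk is N or E. -/
lemma bigwalk_head {w : List Step} {s : Step} {t : List Step} (hw : InHalfPlane w)
    (h : w = s :: t) : s = Step.N ∨ s = Step.E := by
  have hp : [s] <+: w := by rw [h]; exact ⟨t, rfl⟩
  have h1 := inHalfPlane_iff.1 hw [s] hp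
  cases s <;> simp [endpt, Step.vec] at h1 <;> simp

/-- Last step of a nonempty big-walk is S or W. -/
lemma bigwalk_last {w t : List Step} {s : Step} (hw : InHalfPlane w)
    (hend : (endpt w).1 + (endpt w).2 = 0) (h : w = t ++ [s]) :
    s = Step.S ∨ s = Step.W := by
  have ht : t <+: w := by rw [h]; exact ⟨[s], rfl⟩
  have h1 := inHalfPlane_iff.1 hw t ht
  have h2 : endpt w = endpt t + s.vec := by
    rw [h, endpt_append]; simp [endpt, Step.vec]
  have hx : (endpt w).1 = (endpt t).1 + s.vec.1 := by rw [h2]; rfl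
  have hy : (endpt w).2 = (endpt t).2 + s.vec.2 := by rw [h2]; rfl
  cases s
  case N => exfalso; simp [Step.vec] at hx hy; omega
  case E => exfalso; simp [Step.vec] at hx hy; omega
  case S => left; rfl
  case W => right; rfl

/-! ### Locating a step in an append -/

lemma step_loc {a c u v : List Step} {s : Step} (h : a ++ s :: c = u ++ v) :
    (∃ c', a ++ s :: c' = u ∧ c = c' ++ v) ∨ (∃ a', a = u ++ a' ∧ a' ++ s :: c = v) := by
  rcases List.append_eq_append_iff.1 h with ⟨a', h1, h2⟩ | ⟨c', h1, h2⟩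
  · cases a' with
    | nil => right; exact ⟨[], by simpa using h1.symm, by simpa using h2⟩
    | cons x a'' =>
      cases h2
      left
      exact ⟨a'', by simpa using h1.symm, rfl⟩
  · right; exact ⟨c', h1, h2.symm⟩

lemma step_loc_join {a c : List Step} {s : Step} {L : List (List Step)}
    (h : a ++ s :: c = L.flatten) :
    ∃ L₁ w L₂ a' c', L = L₁ ++ w :: L₂ ∧ a = L₁.flatten ++ a' ∧ a' ++ s :: c' = w ∧
      c = c' ++ L₂.flatten := by
  induction L generalizing a with
  | nil => simp [List.flatten] at h
  | cons w L ih =>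
    rw [join_cons'] at h
    rcases step_loc h with ⟨c', h1, h2⟩ | ⟨a', h1, h2⟩
    · exact ⟨[], w, L, a, c', by simp, by simp, h1, h2⟩
    · obtain ⟨L₁, w', L₂, a'', c', hL, ha, hw, hc⟩ := ih h2
      refine ⟨w :: L₁, w', L₂, a'', c', by simp [hL], ?_, hw, hc⟩
      rw [h1, ha, join_cons', List.append_assoc]

/-! ### Eagerness machinery -/

lemma infix_pair_append {a b : Step} {u v : List Step} (h : [a, b] <:+: u ++ v) :
    [a, b] <:+: u ∨ [a, b] <:+: v ∨ (u.getLast? = some a ∧ v.head? = some b) := by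
  obtain ⟨x, y, hxy⟩ := h
  have hxy' : x ++ a :: (b :: y) = u ++ v := by simpa using hxy
  rcases step_loc hxy' with ⟨c', h1, h2⟩ | ⟨a', h1, h2⟩
  · cases c' with
    | nil =>
      right; right
      constructor
      · rw [← h1]; simp
      · cases h2; simp
    | cons z c'' =>
      left
      cases h2
      exact ⟨x, c'', by simpa using h1⟩
  · right; left
    exact ⟨a', y, by simpa using h2⟩

lemma eager_append {u v : List Step} (hu : Eager u) (hv : Eager v)
    (hb : ∀ a b, u.getLast? = some a → v.head? = some b →
      ¬(a = Step.E ∧ b = Step.S) ∧ ¬(a = Step.N ∧ b = Step.W)) :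
    Eager (u ++ v) := by
  constructor
  · intro h
    rcases infix_pair_append h with h | h | ⟨h1, h2⟩
    · exact hu.1 h
    · exact hv.1 h
    · exact (hb _ _ h1 h2).1 ⟨rfl, rfl⟩
  · intro h
    rcases infix_pair_append h with h | h | ⟨h1, h2⟩
    · exact hu.2 h
    · exact hv.2 h
    · exact (hb _ _ h1 h2).2 ⟨rfl, rfl⟩

lemma eager_replicate (n : ℕ) (c : Step) : Eager (replicate n c) := by
  constructor
  · intro h
    have hE : Step.E = c := List.eq_of_mem_replicate (h.subset (by simp))
    have hS : Step.S = c := List.eq_of_mem_replicate (h.subset (by simp))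
    exact absurd (hE.trans hS.symm) (by decide)
  · intro h
    have hN : Step.N = c := List.eq_of_mem_replicate (h.subset (by simp))
    have hW : Step.W = c := List.eq_of_mem_replicate (h.subset (by simp))
    exact absurd (hN.trans hW.symm) (by decide)

/-- A walk whose ends behave well for concatenation. -/
def GoodEnds (w : List Step) : Prop :=
  Eager w ∧ (∀ s, w.head? = some s → s = Step.N ∨ s = Step.E) ∧
    (∀ s, w.getLast? = some s → s = Step.S ∨ s = Step.W)

lemma goodEnds_nil : GoodEnds [] := by
  refine ⟨⟨?_, ?_⟩, by simp, by simp⟩ <;> intro h <;> have := h.length_le <;> simp at this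

lemma goodEnds_append {u v : List Step} (hu : GoodEnds u) (hv : GoodEnds v) :
    GoodEnds (u ++ v) := by
  refine ⟨eager_append hu.1 hv.1 ?_, ?_, ?_⟩
  · intro a b ha hb
    rcases hu.2.2 a ha with rfl | rfl <;> simp
  · intro s hs
    rw [List.head?_append] at hs
    rcases Option.or_eq_some_iff.1 hs with h | ⟨h, h2⟩
    · exact hu.2.1 s h
    · exact hv.2.1 s h2
  · intro s hs
    rw [List.getLast?_append] at hs
    rcases Option.or_eq_some_iff.1 hs with h | ⟨h, h2⟩
    · exact hv.2.2 s h
    · exact hu.2.2 s h2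

lemma goodEnds_bigwalk {w : List Step} (hw : IsBigWalk w) : GoodEnds w := by
  refine ⟨hw.2.2.2, ?_, ?_⟩
  · intro s hs
    cases w with
    | nil => simp at hs
    | cons x t =>
      simp at hs
      subst hs
      exact bigwalk_head hw.1 rfl
  · intro s hs
    rcases List.eq_nil_or_concat w with rfl | ⟨t, x, rfl⟩
    · simp at hs
    · simp at hs
      subst hs
      exact bigwalk_last (t := t) hw.1 hw.2.1 (List.concat_eq_append (as := t) (a := x))

lemma goodEnds_join {L : List (List Step)} (h : ∀ w ∈ L, GoodEnds w) :
    GoodEnds L.flatten := by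
  induction L with
  | nil => exact goodEnds_nil
  | cons w L ih =>
    rw [join_cons']
    exact goodEnds_append (h w (by simp)) (ih fun w hw => h w (by simp [hw]))

end Infra2

section Infra3
open List Step

/-- The walk consisting of stage 1 plus the first `k` appended walks. -/
def Awalk (m : ℕ) (ws : Fin m → List Step) (k : ℕ) : List Step :=
  stage1 m ++ ((List.ofFn ws).take k).flatten

lemma endpt_stage1 (m : ℕ) : endpt (stage1 m) = ((2 * m : ℤ), (2 * m : ℤ)) := by
  simp [stage1, endpt_append, endpt_replicate, endpt_cons, Step.vec, Prod.ext_iff]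

lemma length_stage1 (m : ℕ) : (stage1 m).length = 4 * m + 4 := by
  simp [stage1]
  ring

lemma join_append' (L₁ L₂ : List (List Step)) : (L₁ ++ L₂).flatten = L₁.flatten ++ L₂.flatten :=
  List.flatten_append

lemma Awalk_zero (m : ℕ) (ws : Fin m → List Step) : Awalk m ws 0 = stage1 m := by
  simp [Awalk, List.flatten]

lemma Awalk_succ (m : ℕ) (ws : Fin m → List Step) {k : ℕ} (hk : k < m) :
    Awalk m ws (k + 1) = Awalk m ws k ++ ws ⟨k, hk⟩ := by
  have h : (List.ofFn ws).take (k+1) = (List.ofFn ws).take k ++ [ws ⟨k, hk⟩] := by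
    rw [List.take_succ]
    congr
    rw [List.getElem?_eq_getElem (by simpa using hk), List.getElem_ofFn]
    rfl
  rw [Awalk, h, join_append', ← List.append_assoc]
  simp [Awalk, List.flatten]

lemma Awalk_last (m : ℕ) (ws : Fin m → List Step) :
    Awalk m ws m = stage1 m ++ stage2 m ws := by
  rw [Awalk, stage2]
  congr 1
  rw [List.take_of_length_le (by simp)]

/-- Extract big-walk facts from a valid tuple. -/
lemma valid_bigwalk {m : ℕ} {ws : Fin m → List Step} (hws : ValidTuple m ws) (k : Fin m) :
    IsBigWalk (ws k) := by
  have h := (hws k).2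
  split_ifs at h
  · exact h.1
  · exact h.1

lemma invariant {m : ℕ} {ws : Fin m → List Step} (hws : ValidTuple m ws) :
    ∀ k, k ≤ m → (endpt (Awalk m ws k)).1 + (endpt (Awalk m ws k)).2 = 4 * m ∧
      (m : ℤ) ≤ (endpt (Awalk m ws k)).1 ∧ (endpt (Awalk m ws k)).1 ≤ 3 * m := by
  intro k
  induction k with
  | zero =>
    intro _
    rw [Awalk_zero, endpt_stage1]
    simp
    omega
  | succ k ih =>
    intro hk1
    have hk : k < m := hk1
    obtain ⟨hs, hx1, hx2⟩ := ih (le_of_lt hk)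
    have hBW := valid_bigwalk hws ⟨k, hk⟩
    have hlen : (ws ⟨k, hk⟩).length = 2 * m := (hws ⟨k, hk⟩).1
    have hσ : (endpt (ws ⟨k, hk⟩)).1 + (endpt (ws ⟨k, hk⟩)).2 = 0 := hBW.2.1
    have hb := bigwalk_prefix_coords hBW.1 (le_of_eq hlen) (List.prefix_refl _)
    have h2 : if 2 * (m : ℤ) < (endpt (Awalk m ws k)).1 then IsLeftWalk (ws ⟨k, hk⟩)
        else IsRightWalk (ws ⟨k, hk⟩) := (hws ⟨k, hk⟩).2
    rw [Awalk_succ m ws hk, endpt_append, Prod.fst_add, Prod.snd_add]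
    by_cases hc : 2 * (m : ℤ) < (endpt (Awalk m ws k)).1
    · rw [if_pos hc] at h2
      have he : (endpt (ws ⟨k, hk⟩)).1 ≤ 0 := h2.2
      omega
    · rw [if_neg hc] at h2
      have he : 0 ≤ (endpt (ws ⟨k, hk⟩)).1 := h2.2
      omega

end Infra3

section Infra4
open List Step

lemma prefix_append_cases {t a b : List Step} (h : t <+: a ++ b) :
    t <+: a ∨ ∃ t', t = a ++ t' ∧ t' <+: b := by
  rcases List.prefix_or_prefix_of_prefix h (List.prefix_append a b) with h1 | h1
  · left; exact h1
  · right
    obtain ⟨t', rfl⟩ := h1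
    refine ⟨t', rfl, ?_⟩
    obtain ⟨d, hd⟩ := h
    rw [List.append_assoc] at hd
    exact ⟨d, (List.append_cancel_left hd)⟩

lemma prefix_replicate {t : List Step} {n : ℕ} {c : Step} (h : t <+: replicate n c) :
    ∃ i, t = replicate i c ∧ i ≤ n := by
  refine ⟨t.length, List.eq_replicate_of_mem ?_, by simpa using h.length_le⟩
  intro b hb
  exact List.eq_of_mem_replicate (h.sublist.subset hb)

lemma count_le_of_prefix {t w : List Step} (h : t <+: w) (c : Step) :
    t.count c ≤ w.count c := h.sublist.count_le c

/-- Quarter-plane confinement for prefixes of stage 1. -/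
lemma stage1_prefix_qp {m : ℕ} (hm : 1 ≤ m) {t : List Step} (h : t <+: stage1 m) :
    0 ≤ (endpt t).1 ∧ 0 ≤ (endpt t).2 := by
  rw [stage1, List.append_assoc] at h
  rcases prefix_append_cases h with h1 | ⟨t', rfl, h1⟩
  · obtain ⟨i, rfl, -⟩ := prefix_replicate h1
    simp [endpt_replicate, Step.vec]
  · rcases prefix_append_cases h1 with h2 | ⟨t'', rfl, h2⟩
    · obtain ⟨i, rfl, -⟩ := prefix_replicate h2
      simp [endpt_append, endpt_replicate, Step.vec]
      omega
    · have hcS : t''.count Step.S ≤ 2 := by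
        have := count_le_of_prefix h2 Step.S
        simpa using this
      have hcW : t''.count Step.W = 0 := by
        have := count_le_of_prefix h2 Step.W
        simpa using this
      have hc := endpt_count t''
      have hx : (endpt t'').1 = (t''.count Step.E : ℤ) - t''.count Step.W := by rw [hc]
      have hy : (endpt t'').2 = (t''.count Step.N : ℤ) - t''.count Step.S := by rw [hc]
      rw [endpt_append, endpt_append, endpt_replicate, endpt_replicate]
      simp [Step.vec]
      omega

/-- Quarter-plane confinement for prefixes of `Awalk m ws k`. -/
lemma Awalk_prefix_qp {m : ℕ} {ws : Fin m → List Step} (hm : 1 ≤ m)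
    (hws : ValidTuple m ws) :
    ∀ k, k ≤ m → ∀ t, t <+: Awalk m ws k → 0 ≤ (endpt t).1 ∧ 0 ≤ (endpt t).2 := by
  intro k
  induction k with
  | zero =>
    intro _ t ht
    rw [Awalk_zero] at ht
    exact stage1_prefix_qp hm ht
  | succ k ih =>
    intro hk1 t ht
    have hk : k < m := hk1
    rw [Awalk_succ m ws hk] at ht
    rcases prefix_append_cases ht with h1 | ⟨t', rfl, h1⟩
    · exact ih (le_of_lt hk) t h1
    · have hBW := valid_bigwalk hws ⟨k, hk⟩
      have hlen : (ws ⟨k, hk⟩).length = 2 * m := (hws ⟨k, hk⟩).1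
      have hb := bigwalk_prefix_coords hBW.1 (le_of_eq hlen) h1
      obtain ⟨hs, hx1, hx2⟩ := invariant hws k (le_of_lt hk)
      rw [endpt_append, Prod.fst_add, Prod.snd_add]
      omega

lemma construct_eq (m : ℕ) (ws : Fin m → List Step) :
    construct m ws = Awalk m ws m ++ stage3 m ws := by
  rw [construct, Awalk_last, List.append_assoc]

lemma endpt_stage3 (m : ℕ) (ws : Fin m → List Step) :
    endpt (stage3 m ws) =
      (-((endpt (Awalk m ws m)).1.toNat : ℤ), -((endpt (Awalk m ws m)).2.toNat : ℤ)) := by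
  rw [stage3, ← Awalk_last, endpt_append, endpt_replicate, endpt_replicate]
  simp [Step.vec, Prod.ext_iff]

/-- Quarter-plane confinement for the whole construction. -/
lemma construct_qp {m : ℕ} {ws : Fin m → List Step} (hm : 1 ≤ m)
    (hws : ValidTuple m ws) : InQuarterPlane (construct m ws) := by
  intro p hp
  obtain ⟨t, ht, rfl⟩ := mem_positions_iff.1 hp
  rw [construct_eq] at ht
  obtain ⟨hs, hx1, hx2⟩ := invariant hws m le_rfl
  rcases prefix_append_cases ht with h1 | ⟨t', rfl, h1⟩
  · exact Awalk_prefix_qp hm hws m le_rfl t h1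
  · rw [stage3, ← Awalk_last] at h1
    rcases prefix_append_cases h1 with h2 | ⟨t'', rfl, h2⟩
    · obtain ⟨i, rfl, hlen⟩ := prefix_replicate h2
      rw [endpt_append, endpt_replicate]
      simp [Step.vec]
      omega
    · obtain ⟨i, rfl, hlen⟩ := prefix_replicate h2
      rw [endpt_append, endpt_append, endpt_replicate, endpt_replicate]
      simp [Step.vec]
      omega

lemma construct_endpt {m : ℕ} {ws : Fin m → List Step} (hws : ValidTuple m ws) :
    endpt (construct m ws) = (0, 0) := by
  rw [construct_eq, endpt_append, endpt_stage3]
  obtain ⟨hs, hx1, hx2⟩ := invariant hws m le_rfl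
  have h1 : (0:ℤ) ≤ (endpt (Awalk m ws m)).1 := by omega
  have h2 : (0:ℤ) ≤ (endpt (Awalk m ws m)).2 := by omega
  rw [Prod.ext_iff]
  simp
  omega

lemma construct_length {m : ℕ} {ws : Fin m → List Step} (hws : ValidTuple m ws) :
    (construct m ws).length = 2 * m ^ 2 + 8 * m + 4 := by
  have hs2 : (stage2 m ws).length = 2 * m ^ 2 := by
    rw [stage2, List.length_flatten]
    have : (List.ofFn ws).map List.length = List.ofFn (fun k => (ws k).length) := by
      simp [List.map_ofFn]
      rfl
    rw [this]
    have : (List.ofFn (fun k => (ws k).length)) = List.ofFn (fun _ : Fin m => 2 * m) := by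
      congr 1
      funext k
      exact (hws k).1
    rw [this, List.sum_ofFn]
    simp
    ring
  have hs3 : (stage3 m ws).length = 4 * m := by
    rw [stage3, ← Awalk_last]
    obtain ⟨hs, hx1, hx2⟩ := invariant hws m le_rfl
    simp
    omega
  rw [construct, List.length_append, List.length_append, length_stage1, hs2]
  rw [stage3, ← Awalk_last] at hs3 ⊢
  rw [hs3]
  ring

end Infra4

section Infra5
open List Step

lemma mem_of_getLast?' {l : List Step} {a : Step} (h : l.getLast? = some a) : a ∈ l := by
  rcases List.eq_nil_or_concat l with rfl | ⟨t, x, rfl⟩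
  · simp at h
  · simp at h
    simp [h]

lemma eager_stage1 (m : ℕ) : Eager (stage1 m) := by
  rw [stage1, List.append_assoc]
  apply eager_append (eager_replicate _ _)
  · apply eager_append (eager_replicate _ _) (by constructor <;> decide)
    intro a b ha hb
    have ha' : a = Step.E := List.eq_of_mem_replicate (mem_of_getLast?' ha)
    have hb' : b = Step.N := (by simpa using hb : Step.N = b).symm
    subst ha' hb'
    simp
  · intro a b ha hb
    have ha' : a = Step.N := List.eq_of_mem_replicate (mem_of_getLast?' ha)
    have hb' : b ∈ replicate (2 * m) Step.E ++ [Step.N, Step.S, Step.S] :=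
      List.mem_of_mem_head? (by simp [hb])
    have hbW : b ≠ Step.W := by
      intro hbW
      subst hbW
      simp [List.mem_replicate] at hb'
    subst ha'
    simp
    tauto

lemma eager_construct {m : ℕ} {ws : Fin m → List Step} (hws : ValidTuple m ws) :
    Eager (construct m ws) := by
  have h2 : GoodEnds (stage2 m ws) := by
    apply goodEnds_join
    intro w hw
    obtain ⟨k, rfl⟩ := Set.mem_range.1 ((List.mem_ofFn' _ _).1 hw)
    exact goodEnds_bigwalk (valid_bigwalk hws k)
  have h3 : Eager (stage3 m ws) := by
    rw [stage3]
    apply eager_append (eager_replicate _ _) (eager_replicate _ _)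
    intro a b ha hb
    have ha' : a = Step.S := List.eq_of_mem_replicate (mem_of_getLast?' ha)
    subst ha'
    simp
  rw [construct, List.append_assoc]
  apply eager_append (eager_stage1 m) (eager_append h2.1 h3 ?_) ?_
  · intro a b ha hb
    rcases h2.2.2 a ha with rfl | rfl <;> simp
  · intro a b ha hb
    have ha' : a = Step.S := by
      rw [stage1] at ha
      simp [List.getLast?_append] at ha
      exact ha.symm
    subst ha'
    simp
end Infra5

section Infra6
open List Step

lemma standard_construct {m : ℕ} {ws : Fin m → List Step} (hm : 1 ≤ m)
    (hws : ValidTuple m ws) : Standard (construct m ws) := by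
  intro a l b hdecomp hloop
  have hne := hloop.1
  have hend := hloop.2.1
  cases l with
  | nil => exact absurd rfl hne
  | cons s l₂ =>
  have hfst := qploop_prefix hloop (show [s] <+: s :: l₂ from ⟨l₂, by simp⟩)
  cases s
  case N => rfl
  case S => exfalso; simp [endpt, Step.vec] at hfst
  case W => exfalso; simp [endpt, Step.vec] at hfst
  case E =>
  exfalso
  have hd : a ++ Step.E :: (l₂ ++ b) = stage1 m ++ (stage2 m ws ++ stage3 m ws) := by
    rw [← List.cons_append, ← List.append_assoc, ← hdecomp, construct, List.append_assoc]
  have hpre_l : a ++ (Step.E :: l₂) <+: construct m ws := ⟨b, by rw [← hdecomp]⟩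
  rcases step_loc hd with ⟨c', h1, h2⟩ | ⟨a₂, ha, h2⟩
  · -- Case 1 : the E step lies in stage 1
    have hpre_s1 : stage1 m <+: construct m ws :=
      ⟨stage2 m ws ++ stage3 m ws, by rw [construct, List.append_assoc]⟩
    -- localize within stage1 : a = repN ++ a₂ with a₂ a run of E's
    rw [stage1, List.append_assoc] at h1
    rcases step_loc h1 with ⟨c₀, h3, -⟩ | ⟨a₂, ha₂, h3⟩
    · have : Step.E ∈ replicate (2 * m + 1) Step.N := by
        rw [← h3]; simp
      simp [List.mem_replicate] at this
    rcases step_loc h3 with ⟨c₃, h4, -⟩ | ⟨a₃, -, h4⟩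
    swap
    · have : Step.E ∈ [Step.N, Step.S, Step.S] := by
        rw [← h4]; simp
      simp at this
    -- a₂ is a run of E's
    have ha₂rep : a₂ = replicate a₂.length Step.E := by
      apply List.eq_replicate_of_mem
      intro x hx
      have : x ∈ replicate (2 * m) Step.E := by rw [← h4]; simp [hx]
      exact List.eq_of_mem_replicate this
    have hya : (endpt a).2 = 2 * m + 1 := by
      rw [ha₂, ha₂rep, endpt_append, endpt_replicate, endpt_replicate]
      simp [Step.vec]
    rcases List.prefix_or_prefix_of_prefix hpre_l hpre_s1 with hcmp | hcmp
    · -- the loop lies entirely inside stage 1 : but it must contain a W step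
      obtain ⟨d, hd2⟩ := hcmp
      have hcnt := endpt_count (Step.E :: l₂)
      have hx0 : (endpt (Step.E :: l₂)).1 = 0 := by rw [hend]
      have hcE : (0:ℤ) < ((Step.E :: l₂).count Step.E : ℤ) := by
        simp [List.count_cons]
      have hcW : 0 < (Step.E :: l₂).count Step.W := by
        have : (endpt (Step.E :: l₂)).1 =
            (((Step.E :: l₂).count Step.E : ℤ)) - ((Step.E :: l₂).count Step.W : ℤ) := by
          rw [hcnt]
        omega
      have hWmem : Step.W ∈ l₂ := by
        simpa using List.count_pos_iff.1 hcW
      have : Step.W ∈ stage1 m := by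
        rw [← hd2]
        simp [hWmem]
      simp [stage1, List.mem_replicate] at this
    · -- the loop extends beyond stage 1 : its prefix up to the end of stage 1 drops too low
      obtain ⟨d, hd2⟩ := hcmp
      have hs1 : stage1 m = a ++ (Step.E :: c') := by
        rw [stage1, List.append_assoc]
        exact h1.symm
      rw [hs1, List.append_assoc] at hd2
      have hl₀ : (Step.E :: c') ++ d = Step.E :: l₂ := List.append_cancel_left hd2
      have hl₀pre : (Step.E :: c') <+: Step.E :: l₂ := ⟨d, hl₀⟩
      have hqp := qploop_prefix hloop hl₀pre
      have heq : endpt (stage1 m) = endpt a + endpt (Step.E :: c') := by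
        rw [hs1, endpt_append]
      have hy : (2 * (m : ℤ)) = (endpt a).2 + (endpt (Step.E :: c')).2 := by
        have h := congrArg Prod.snd heq
        simpa [endpt_stage1] using h
      obtain ⟨-, hqp2⟩ := hqp
      omega
  · -- Case 2 : the E step lies in stage 2 or stage 3
    rcases step_loc h2 with ⟨c₃, h3, -⟩ | ⟨a₃, -, h3⟩
    swap
    · have : Step.E ∈ stage3 m ws := by rw [← h3]; simp
      rw [stage3] at this
      simp [List.mem_replicate] at this
    -- the E step lies in walk number r
    rw [stage2] at h3
    obtain ⟨L₁, w, L₂, a₃, c₄, hL, ha₃, hw, -⟩ := step_loc_join h3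
    set r := L₁.length with hrdef
    have hr : r < m := by
      have := congrArg List.length hL
      simp at this
      omega
    have hwr : w = ws ⟨r, hr⟩ := by
      have hdrop : (List.ofFn ws).drop r = w :: L₂ := by
        rw [hL]; exact List.drop_left
      have h5 : (List.ofFn ws)[r]? = some w := by
        rw [← List.head?_drop, hdrop]
        rfl
      rw [List.getElem?_eq_getElem (by simpa using hr), List.getElem_ofFn] at h5
      exact (Option.some_injective _ h5).symm
    have hJ : L₁.flatten = ((List.ofFn ws).take r).flatten := by
      rw [hL, List.take_left]
    have ha' : a = Awalk m ws r ++ a₃ := by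
      rw [ha, ha₃, hJ, Awalk, List.append_assoc]
    have hw' : a₃ ++ Step.E :: c₄ = ws ⟨r, hr⟩ := by rw [hw, hwr]
    have hA1 : Awalk m ws (r + 1) = a ++ (Step.E :: c₄) := by
      rw [Awalk_succ m ws hr, ha', List.append_assoc, hw']
    have hBW := valid_bigwalk hws ⟨r, hr⟩
    -- Awalk (r+1) is a prefix of the construction
    have hAm : Awalk m ws m = stage1 m ++ (List.ofFn ws).flatten := by
      rw [Awalk, List.take_of_length_le (by simp)]
    have hpre_next : Awalk m ws (r + 1) <+: construct m ws := by
      have h6 : Awalk m ws (r + 1) ++ ((List.ofFn ws).drop (r + 1)).flatten = Awalk m ws m := by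
        rw [Awalk, hAm, List.append_assoc, ← join_append', List.take_append_drop]
      have h7 : Awalk m ws m <+: construct m ws := ⟨stage3 m ws, (construct_eq m ws).symm⟩
      exact List.IsPrefix.trans ⟨_, h6⟩ h7
    rcases List.prefix_or_prefix_of_prefix hpre_l hpre_next with hcmp | hcmp
    · -- (i) the loop stays inside walk r : use its standardness directly
      rw [hA1] at hcmp
      have hcmp' := (List.prefix_append_right_inj a).1 hcmp
      obtain ⟨d, hd2⟩ := hcmp'
      have hww : ws ⟨r, hr⟩ = a₃ ++ (Step.E :: l₂) ++ d := by
        rw [← hw', ← hd2, List.append_assoc]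
      have := hBW.2.2.1 a₃ (Step.E :: l₂) d hww hloop
      simp at this
    · -- (ii) the loop passes the end of walk r
      obtain ⟨d, hd2⟩ := hcmp
      rw [hA1, List.append_assoc] at hd2
      have hl₀ : (Step.E :: c₄) ++ d = Step.E :: l₂ := List.append_cancel_left hd2
      have hl₀pre : (Step.E :: c₄) <+: Step.E :: l₂ := ⟨d, hl₀⟩
      have hqp := qploop_prefix hloop hl₀pre
      -- arithmetic on x+y
      obtain ⟨hs_r, -, -⟩ := invariant hws r (le_of_lt hr)
      obtain ⟨hs_r1, -, -⟩ := invariant hws (r + 1) hr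
      have ha₃pre : a₃ <+: ws ⟨r, hr⟩ := ⟨Step.E :: c₄, hw'⟩
      have hhalf := inHalfPlane_iff.1 hBW.1 a₃ ha₃pre
      have heA1 : endpt (Awalk m ws (r + 1)) = endpt a + endpt (Step.E :: c₄) := by
        rw [hA1, endpt_append]
      have heA : endpt a = endpt (Awalk m ws r) + endpt a₃ := by
        rw [ha', endpt_append]
      have hx1 : (endpt (Awalk m ws (r+1))).1 = (endpt a).1 + (endpt (Step.E :: c₄)).1 := by
        rw [heA1]; rfl
      have hy1 : (endpt (Awalk m ws (r+1))).2 = (endpt a).2 + (endpt (Step.E :: c₄)).2 := by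
        rw [heA1]; rfl
      have hx2 : (endpt a).1 = (endpt (Awalk m ws r)).1 + (endpt a₃).1 := by rw [heA]; rfl
      have hy2 : (endpt a).2 = (endpt (Awalk m ws r)).2 + (endpt a₃).2 := by rw [heA]; rfl
      have hzero : endpt (Step.E :: c₄) = (0, 0) := by
        rw [Prod.ext_iff]
        constructor <;> simp <;> omega
      -- the suffix of walk r is a QP-loop starting with E
      have hQPloop : IsQPLoop (Step.E :: c₄) := by
        refine ⟨by simp, hzero, ?_⟩
        intro p hp
        obtain ⟨u, hu, rfl⟩ := mem_positions_iff.1 hp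
        exact qploop_prefix hloop (hu.trans hl₀pre)
      have hww : ws ⟨r, hr⟩ = a₃ ++ (Step.E :: c₄) ++ [] := by
        rw [List.append_nil, hw']
      have := hBW.2.2.1 a₃ (Step.E :: c₄) [] hww hQPloop
      simp at this

end Infra6

/-- The constructed path is a 2sip-walk of length 2m² + 8m + 4. -/
theorem construct_is_2sipWalk (m : ℕ) (hm : 1 ≤ m) (ws : Fin m → List Step)
    (hws : ValidTuple m ws) :
    Is2sipWalk (construct m ws) ∧ (construct m ws).length = 2 * m ^ 2 + 8 * m + 4 :=
  ⟨⟨construct_qp hm hws, construct_endpt hws, standard_construct hm hws, eager_construct hws⟩,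
    construct_length hws⟩
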